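/- Let T⁺ = T ∩ {x₂ ≥ 0} and T⁻ = T ∩ {x₂ ≤ 0} be the two pieces of a polygon T cut by the x-axis, and let β⁺, β⁻ > 0. The space of piecewise linear functions q on T with q linear on T⁺ and on T⁻, continuous across the x-axis, and with β⁺ ∂q/∂y on T⁺ equal to β⁻ ∂q/∂y on T⁻ along the cut, has dimension 3. -/

import Mathlib

/-!
Broken linear functions on a polygon `T ⊂ ℝ²` cut by the x-axis into
`T⁺ = T ∩ {x₂ ≥ 0}` and `T⁻ = T ∩ {x₂ ≤ 0}`.
A broken linear function is a pair of affine functions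
`q⁺(x,y) = a⁺ + b⁺ x + c⁺ y` on `T⁺` and `q⁻(x,y) = a⁻ + b⁻ x + c⁻ y` on `T⁻`,
encoded by its coefficient pair `((a⁺,b⁺,c⁺),(a⁻,b⁻,c⁻)) ∈ (ℝ×ℝ×ℝ)×(ℝ×ℝ×ℝ)`,
satisfying continuity across the cut line `{x₂ = 0}` (i.e. `q⁺(x,0) = q⁻(x,0)`
for all `x`) and the flux condition `β⁺ ∂q⁺/∂y = β⁻ ∂q⁻/∂y` along the cut
(the normal is `n = (0,-1)`, so this is `β⁺ c⁺ = β⁻ c⁻`).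
-/

/-- The space of broken linear functions (coefficient representation). -/
def brokenSpace (βp βm : ℝ) : Submodule ℝ ((ℝ × ℝ × ℝ) × (ℝ × ℝ × ℝ)) where
  carrier := {p | (∀ x : ℝ, p.1.1 + p.1.2.1 * x = p.2.1 + p.2.2.1 * x) ∧
      βp * p.1.2.2 = βm * p.2.2.2}
  add_mem' := by
    rintro a b ⟨ha1, ha2⟩ ⟨hb1, hb2⟩
    refine ⟨fun x => ?_, ?_⟩
    · have h1 := ha1 x; have h2 := hb1 x
      simp only [Prod.fst_add, Prod.snd_add] at *
      ring_nf
      ring_nf at h1 h2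
      linarith
    · simp only [Prod.fst_add, Prod.snd_add] at *
      ring_nf
      ring_nf at ha2 hb2
      linarith
  zero_mem' := by simp
  smul_mem' := by
    rintro r a ⟨ha1, ha2⟩
    refine ⟨fun x => ?_, ?_⟩
    · have h1 := ha1 x
      simp only [Prod.smul_fst, Prod.smul_snd, smul_eq_mul] at *
      linear_combination r * h1
    · simp only [Prod.smul_fst, Prod.smul_snd, smul_eq_mul] at *
      linear_combination r * ha2

/-- The space of piecewise linear functions on `T`, linear on
each of `T⁺`, `T⁻`, continuous across the x-axis and with matching scaled normal
derivative `β⁺ ∂q⁺/∂y = β⁻ ∂q⁻/∂y` along the cut, has dimension 3. -/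
theorem brokenSpace_finrank_eq_three (βp βm : ℝ) (hβp : 0 < βp) (hβm : 0 < βm) :
    Module.finrank ℝ (brokenSpace βp βm) = 3 := by
  have hβm' : βm ≠ 0 := hβm.ne'
  let e : (ℝ × ℝ × ℝ) ≃ₗ[ℝ] brokenSpace βp βm :=
    { toFun := fun v => ⟨((v.1, v.2.1, v.2.2), (v.1, v.2.1, βp / βm * v.2.2)),
        ⟨fun x => rfl, by field_simp⟩⟩
      map_add' := by
        intro a b
        ext <;> simp <;> ring
      map_smul' := by
        intro r a
        ext <;> simp <;> ring
      invFun := fun p => (p.1.1.1, p.1.1.2.1, p.1.1.2.2)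
      left_inv := by intro v; rfl
      right_inv := by
        rintro ⟨⟨⟨a1, b1, c1⟩, ⟨a2, b2, c2⟩⟩, h1, h2⟩
        have h0 := h1 0
        have h1' := h1 1
        simp at h0 h1' h2 ⊢
        apply Subtype.ext
        simp only [Prod.mk.injEq, true_and]
        refine ⟨h0, by linarith, ?_⟩
        field_simp
        linarith [h2] }
  rw [← e.finrank_eq]
  simp [Module.finrank_prod]
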